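/- arXiv:1801.03205 — 3 statements merged into one kernel-verified Lean document; each statement's English description precedes it below -/
import Mathlib

section
/- Let Σ ⊂ ℂ^{N+1} be closed, suppose each point of ℂ^N has a neighborhood U with {z ∈ ℂ : (λ,z) ∈ Σ for some λ ∈ U} bounded, and suppose that for every R > 0 the intersection of Σ with the closed ball of radius R centered at the origin of ℂ^{N+1} is polynomially convex. Then for every compact polynomially convex set K ⊂ ℂ^N, the set τ^{-1}(K) is polynomially convex, where τ is the restriction to Σ of the projection onto the first N coordinates. -/
open Metric MvPolynomial Set MeasureTheory

noncomputable section

/-- The polynomial hull of a set `X ⊆ ℂ^N`. -/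
def polyHull (N : ℕ) (X : Set (Fin N → ℂ)) : Set (Fin N → ℂ) :=
  {z | ∀ p : MvPolynomial (Fin N) ℂ,
    ‖eval z p‖ ≤ sSup ((fun x => ‖eval x p‖) '' X)}

/-- The polynomial hull of a set `Y ⊆ ℂ^N × ℂ ≅ ℂ^{N+1}`. -/
def polyHullP (N : ℕ) (Y : Set ((Fin N → ℂ) × ℂ)) : Set ((Fin N → ℂ) × ℂ) :=
  {w | ∀ p : MvPolynomial (Fin (N + 1)) ℂ,
    ‖eval (Fin.snoc w.1 w.2) p‖ ≤ sSup ((fun x => ‖eval (Fin.snoc x.1 x.2) p‖) '' Y)}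

/-- `u` is plurisubharmonic on `s`: upper semicontinuous and satisfying the
sub-mean-value inequality on every closed complex disc contained in `s`. -/
def PSHOn {E : Type*} [NormedAddCommGroup E] [NormedSpace ℂ E]
    (u : E → ℝ) (s : Set E) : Prop :=
  UpperSemicontinuousOn u s ∧
  ∀ a b : E, ∀ c : ℂ, ∀ r : ℝ, 0 < r →
    (∀ lam : ℂ, ‖lam - c‖ ≤ r → a + lam • b ∈ s) →
    u (a + c • b) ≤ (2 * Real.pi)⁻¹ *
      ∫ θ in (0:ℝ)..(2 * Real.pi),
        u (a + (c + (r : ℂ) * Complex.exp (θ * Complex.I)) • b)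

/-- An open set is pseudoconvex if it admits a continuous plurisubharmonic
exhaustion function. -/
def Pseudoconvex {E : Type*} [NormedAddCommGroup E] [NormedSpace ℂ E]
    (Ω : Set E) : Prop :=
  ∃ φ : E → ℝ, ContinuousOn φ Ω ∧ PSHOn φ Ω ∧ ∀ c : ℝ, IsCompact {z ∈ Ω | φ z ≤ c}

/-- `S` contains no analytic discs: there is no injective holomorphic map of the
open unit disc into `E` whose image lies in `S`. -/
def ContainsNoAnalyticDiscs {E : Type*} [NormedAddCommGroup E] [NormedSpace ℂ E]
    (S : Set E) : Prop :=
  ¬ ∃ σ : ℂ → E, DifferentiableOn ℂ σ (ball (0:ℂ) 1) ∧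
      InjOn σ (ball (0:ℂ) 1) ∧ σ '' ball (0:ℂ) 1 ⊆ S

theorem preimage_polynomially_convex (N : ℕ)
    (S : Set ((Fin N → ℂ) × ℂ))
    (hcl : IsClosed S)
    (hbd : ∀ lam₀ : Fin N → ℂ, ∃ U ∈ nhds lam₀,
      Bornology.IsBounded {z : ℂ | ∃ lam ∈ U, (lam, z) ∈ S})
    (hpc : ∀ R : ℝ, 0 < R →
      polyHullP N (S ∩ Metric.closedBall 0 R) = S ∩ Metric.closedBall 0 R)
    (K : Set (Fin N → ℂ)) (hK : IsCompact K) (hKpc : polyHull N K = K) :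
    polyHullP N {w ∈ S | w.1 ∈ K} = {w ∈ S | w.1 ∈ K} := by
  set T : Set ((Fin N → ℂ) × ℂ) := {w ∈ S | w.1 ∈ K} with hTdef
  have hsnoc : Continuous (fun w : (Fin N → ℂ) × ℂ => (Fin.snoc w.1 w.2 : Fin (N+1) → ℂ)) := by
    apply continuous_pi
    intro i
    refine Fin.lastCases ?_ ?_ i
    · simpa using (continuous_snd : Continuous fun w : (Fin N → ℂ) × ℂ => w.2)
    · intro j; have hc : Continuous fun w : (Fin N → ℂ) × ℂ => w.1 j := (continuous_apply j).comp continuous_fst; simpa using hc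
  rcases T.eq_empty_or_nonempty with hTe | hTne
  · rw [hTe]
    ext w
    simp only [polyHullP, mem_setOf_eq, mem_empty_iff_false, iff_false]
    intro h
    have h1 := h 1
    simp [Real.sSup_empty] at h1
    linarith
  -- T is closed
  have hTcl : IsClosed T := by
    have : T = S ∩ (Prod.fst ⁻¹' K) := by ext w; simp [hTdef, Set.mem_inter_iff]
    rw [this]
    exact hcl.inter (hK.isClosed.preimage continuous_fst)
  -- T is bounded
  choose U hU hUb using hbd
  obtain ⟨t, ht⟩ := (hK.elim_nhds_subcover U (fun x _ => hU x) : _)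
  have hTbd : Bornology.IsBounded T := by
    have hZ : Bornology.IsBounded (⋃ x ∈ t, {z : ℂ | ∃ lam ∈ U x, (lam, z) ∈ S}) :=
      (Bornology.isBounded_biUnion t.finite_toSet).2 fun x _ => hUb x
    have hsub : T ⊆ K ×ˢ (⋃ x ∈ t, {z : ℂ | ∃ lam ∈ U x, (lam, z) ∈ S}) := by
      rintro ⟨a, b⟩ ⟨hS, haK⟩
      refine ⟨haK, ?_⟩
      obtain ⟨x, hxt, hax⟩ := Set.mem_iUnion₂.1 (ht.2 haK)
      exact Set.mem_biUnion hxt ⟨a, hax, hS⟩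
    exact (hK.isBounded.prod hZ).subset hsub
  have hTc : IsCompact T := Metric.isCompact_of_isClosed_isBounded hTcl hTbd
  obtain ⟨R, hR0, hRsub⟩ := hTbd.subset_closedBall_lt 0 0
  have hSB : IsCompact (S ∩ closedBall 0 R) := (isCompact_closedBall 0 R).inter_left hcl
  have hTsub : T ⊆ S ∩ closedBall 0 R := fun w hw => ⟨hw.1, hRsub hw⟩
  apply Set.Subset.antisymm
  · intro w hw
    have hwS : w ∈ S ∩ closedBall 0 R := by
      rw [← hpc R hR0]
      intro p
      refine (hw p).trans (csSup_le_csSup ?_ (hTne.image _) (Set.image_mono hTsub))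
      exact (hSB.image ((p.continuous_eval.comp hsnoc).norm)).bddAbove
    have hwK : w.1 ∈ K := by
      rw [← hKpc]
      intro p
      have h1 := hw (rename (Fin.castSucc) p)
      have he : ∀ x : (Fin N → ℂ) × ℂ,
          eval (Fin.snoc x.1 x.2 : Fin (N+1) → ℂ) (rename Fin.castSucc p) = eval x.1 p := by
        intro x
        rw [eval_rename]
        have hc : (Fin.snoc x.1 x.2 : Fin (N+1) → ℂ) ∘ Fin.castSucc = x.1 :=
          funext fun j => Fin.snoc_castSucc _ _ _
        rw [hc]
      rw [he w] at h1
      refine h1.trans (csSup_le_csSup ?_ (hTne.image _) ?_)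
      · exact ((hK.image (p.continuous_eval.norm)).bddAbove)
      · rintro y ⟨x, hxT, rfl⟩
        exact ⟨x.1, hxT.2, by dsimp only; rw [he x]⟩
    exact ⟨hwS.1, hwK⟩
  · intro w hw p
    refine le_csSup ?_ ⟨w, hw, rfl⟩
    exact (hTc.image ((p.continuous_eval.comp hsnoc).norm)).bddAbove
end
end

section
/- A nonempty topological space is homeomorphic to the Cantor set if and only if it is compact, metrizable, totally disconnected, and has no isolated points. -/
open Metric MvPolynomial Set MeasureTheory

noncomputable section

namespace CantorChar




/-- the map `2^ℕ → ℝ`. -/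
def cmap (b : ℕ → Bool) : ℝ := (2/3) * Cardinal.cantorFunction (1/3) b

lemma cmap_succ (b : ℕ → Bool) :
    cmap b = (cond (b 0) 2 0 + cmap (fun n => b (n+1))) / 3 := by
  rw [cmap, Cardinal.cantorFunction_succ b (by norm_num) (by norm_num), cmap]
  cases h : b 0 <;> simp [h] <;> ring

lemma cmap_nonneg (b : ℕ → Bool) : 0 ≤ cmap b := by
  have : 0 ≤ Cardinal.cantorFunction (1/3) b :=
    tsum_nonneg fun n => Cardinal.cantorFunctionAux_nonneg (by norm_num)
  unfold cmap; positivity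

lemma cmap_le_one (b : ℕ → Bool) : cmap b ≤ 1 := by
  have h1 : Cardinal.cantorFunction (1/3) b ≤ Cardinal.cantorFunction (1/3) (fun _ => true) :=
    Cardinal.cantorFunction_le (by norm_num) (by norm_num) (fun n h => rfl)
  have h2 : Cardinal.cantorFunction (1/3) (fun _ => true) = 3/2 := by
    unfold Cardinal.cantorFunction
    have : ∀ n, Cardinal.cantorFunctionAux (1/3) (fun _ => true) n = (1/3:ℝ)^n := fun n => by
      simp [Cardinal.cantorFunctionAux]
    rw [tsum_congr fun n => this n, tsum_geometric_of_lt_one (by norm_num) (by norm_num)]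
    norm_num
  unfold cmap
  nlinarith [h1, h2]

lemma cmap_mem_preCantorSet (n : ℕ) (b : ℕ → Bool) : cmap b ∈ preCantorSet n := by
  induction n generalizing b with
  | zero => exact ⟨cmap_nonneg b, cmap_le_one b⟩
  | succ n ih =>
    rw [cmap_succ]
    cases h : b 0
    · exact Or.inl ⟨cmap (fun n => b (n+1)), ih _, by simp⟩
    · exact Or.inr ⟨cmap (fun n => b (n+1)), ih _, by simp⟩

lemma cmap_mem_cantorSet (b : ℕ → Bool) : cmap b ∈ cantorSet :=
  mem_iInter.mpr fun n => cmap_mem_preCantorSet n b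

lemma cmap_injective : Function.Injective cmap := by
  intro a b h
  have h2 : Cardinal.cantorFunction (1/3) a = Cardinal.cantorFunction (1/3) b := by
    unfold cmap at h; linarith
  exact Cardinal.cantorFunction_injective (by norm_num : (0:ℝ) < 1/3) (by norm_num) h2

lemma cmap_continuous : Continuous cmap := by
  apply Continuous.mul continuous_const
  have h : Continuous fun b : ℕ → Bool =>
      ∑' n, (fun (n : ℕ) (b : ℕ → Bool) => Cardinal.cantorFunctionAux (1/3) b n) n b := by
    apply continuous_tsum (u := fun n => (1/3:ℝ)^n)
    · intro i
      have : Continuous fun v : Bool => cond v ((1/3:ℝ)^i) 0 := continuous_of_discreteTopology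
      exact this.comp (continuous_apply i)
    · exact summable_geometric_of_lt_one (by norm_num : (0:ℝ) ≤ 1/3) (by norm_num)
    · intro n b
      cases hb : b n <;> simp [Cardinal.cantorFunctionAux, hb] <;> positivity
  exact h




lemma preCantorSet_subset_Icc (n : ℕ) : preCantorSet n ⊆ Icc 0 1 := by
  induction n with
  | zero => exact le_refl _
  | succ n ih =>
    rintro x (⟨y, hy, rfl⟩ | ⟨y, hy, rfl⟩) <;>
      · obtain ⟨h0, h1⟩ := ih hy
        constructor <;> [linarith; linarith]

/-- self-similarity, left piece -/
lemma cantorSet_left {x : ℝ} (hx : x ∈ cantorSet) (h : x ≤ 1/2) : 3*x ∈ cantorSet := by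
  rw [cantorSet, mem_iInter] at hx ⊢
  intro n
  have := hx (n+1)
  rcases this with ⟨y, hy, hxy⟩ | ⟨y, hy, hxy⟩
  · have : 3*x = y := by dsimp at hxy; linarith
    rwa [this]
  · exfalso
    have h0 := (preCantorSet_subset_Icc n hy).1
    dsimp at hxy
    linarith

lemma cantorSet_right {x : ℝ} (hx : x ∈ cantorSet) (h : ¬ x ≤ 1/2) : 3*x - 2 ∈ cantorSet := by
  rw [cantorSet, mem_iInter] at hx ⊢
  intro n
  have := hx (n+1)
  rcases this with ⟨y, hy, hxy⟩ | ⟨y, hy, hxy⟩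
  · exfalso
    have h1 := (preCantorSet_subset_Icc n hy).2
    dsimp at hxy
    linarith
  · have : 3*x - 2 = y := by dsimp at hxy; linarith
    rwa [this]

/-- one step of the expansion -/
def cstep (x : ℝ) : ℝ := if x ≤ 1/2 then 3*x else 3*x - 2

lemma cstep_mem {x : ℝ} (hx : x ∈ cantorSet) : cstep x ∈ cantorSet := by
  unfold cstep
  split_ifs with h
  · exact cantorSet_left hx h
  · exact cantorSet_right hx h

/-- digit sequence of `x` -/
def cdigit : ℕ → ℝ → Bool
  | 0, x => decide (¬ x ≤ 1/2)
  | n+1, x => cdigit n (cstep x)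

lemma key_estimate : ∀ (n : ℕ) (x : ℝ), x ∈ cantorSet →
    |x - cmap (fun k => cdigit k x)| ≤ (1/3)^n := by
  intro n
  induction n with
  | zero =>
    intro x hx
    have h1 := cantorSet_subset_unitInterval hx
    have h2 := cmap_nonneg (fun k => cdigit k x)
    have h3 := cmap_le_one (fun k => cdigit k x)
    rw [abs_le]
    constructor <;> [skip; skip] <;> simp at h1 ⊢ <;> [linarith [h1.1, h1.2]; linarith [h1.1, h1.2]]
  | succ n ih =>
    intro x hx
    have hstep := cstep_mem hx
    have hih := ih (cstep x) hstep
    have htail : (fun k => cdigit (k+1) x) = fun k => cdigit k (cstep x) := rfl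
    have hsucc := cmap_succ (fun k => cdigit k x)
    rw [htail] at hsucc
    have hx' : x = (cond (cdigit 0 x) 2 0 + cstep x) / 3 := by
      by_cases h : x ≤ 1/2
      · have hd : cdigit 0 x = false := by simp [cdigit]; linarith
        rw [hd]
        unfold cstep
        rw [if_pos h, Bool.cond_false]
        ring
      · have hd : cdigit 0 x = true := by simp [cdigit]; linarith [lt_of_not_ge h]
        rw [hd]
        unfold cstep
        rw [if_neg h, Bool.cond_true]
        ring
    have : x - cmap (fun k => cdigit k x) = (cstep x - cmap (fun k => cdigit k (cstep x))) / 3 := by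
      rw [hsucc]
      linarith [hx']
    rw [this, abs_div]
    have h3 : |(3:ℝ)| = 3 := by norm_num
    rw [h3, pow_succ]
    calc |cstep x - cmap fun k => cdigit k (cstep x)| / 3 ≤ (1/3)^n / 3 := by gcongr
      _ = (1/3)^n * (1/3) := by ring

lemma cmap_surj_cantorSet {x : ℝ} (hx : x ∈ cantorSet) : ∃ b, cmap b = x := by
  refine ⟨fun k => cdigit k x, ?_⟩
  have h : ∀ n : ℕ, |x - cmap (fun k => cdigit k x)| ≤ (1/3)^n := fun n => key_estimate n x hx
  have h0 : |x - cmap (fun k => cdigit k x)| ≤ 0 :=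
    ge_of_tendsto' (tendsto_pow_atTop_nhds_zero_of_lt_one (by norm_num) (by norm_num)) h
  have := abs_nonneg (x - cmap (fun k => cdigit k x))
  have : x - cmap (fun k => cdigit k x) = 0 := by
    rw [← abs_eq_zero]; linarith
  linarith [this]



open Classical

variable {α : Type*} [MetricSpace α] [CompactSpace α] [TotallyDisconnectedSpace α] [Nonempty α]

lemma bounded_all (s : Set α) : Bornology.IsBounded s :=
  (isCompact_univ.isBounded).subset (subset_univ s)

lemma two_points (hperf : ∀ x : α, Filter.NeBot (nhdsWithin x {x}ᶜ))
    {U : Set α} (hU : IsOpen U) (hne : U.Nonempty) :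
    ∃ x ∈ U, ∃ y ∈ U, x ≠ y := by
  obtain ⟨x, hx⟩ := hne
  haveI := hperf x
  have h1 : U ∈ nhdsWithin x {x}ᶜ := nhdsWithin_le_nhds (hU.mem_nhds hx)
  have h2 : {x}ᶜ ∈ nhdsWithin x {x}ᶜ := self_mem_nhdsWithin
  obtain ⟨y, hyU, hyx⟩ := Filter.nonempty_of_mem (Filter.inter_mem h1 h2)
  exact ⟨x, hx, y, hyU, fun h => hyx (h ▸ rfl)⟩

lemma split_clopen (hperf : ∀ x : α, Filter.NeBot (nhdsWithin x {x}ᶜ))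
    {U : Set α} (hU : IsClopen U) (hne : U.Nonempty) :
    ∃ V W : Set α, IsClopen V ∧ IsClopen W ∧ V.Nonempty ∧ W.Nonempty ∧
      Disjoint V W ∧ V ∪ W = U := by
  obtain ⟨x, hx, y, hy, hxy⟩ := two_points hperf hU.2 hne
  obtain ⟨Z, hZ, hxZ, hyZ⟩ := exists_isClopen_of_totally_separated hxy
  refine ⟨U ∩ Z, U \ Z, hU.inter hZ, hU.diff hZ, ⟨x, hx, hxZ⟩, ⟨y, hy, hyZ⟩, ?_, ?_⟩
  · exact Set.disjoint_left.mpr fun a ha hb => hb.2 ha.2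
  · rw [Set.inter_union_diff]

/-- disjointify a list of sets -/
def dj : List (Set α) → List (Set α)
  | [] => []
  | A :: l => A :: (dj l).map (· \ A)

lemma dj_subset : ∀ (l : List (Set α)) (V), V ∈ dj l → ∃ W ∈ l, V ⊆ W := by
  intro l
  induction l with
  | nil => intro V h; simp [dj] at h
  | cons A l ih =>
    intro V hV
    rcases List.mem_cons.mp hV with rfl | hV
    · exact ⟨V, List.mem_cons_self, subset_rfl⟩
    · obtain ⟨V', hV', rfl⟩ := List.mem_map.mp hV
      obtain ⟨W, hW, hsub⟩ := ih V' hV'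
      exact ⟨W, List.mem_cons_of_mem _ hW, (diff_subset).trans hsub⟩

lemma dj_clopen : ∀ (l : List (Set α)), (∀ W ∈ l, IsClopen W) → ∀ V ∈ dj l, IsClopen V := by
  intro l
  induction l with
  | nil => intro _ V h; simp [dj] at h
  | cons A l ih =>
    intro hl V hV
    rcases List.mem_cons.mp hV with rfl | hV
    · exact hl _ (List.mem_cons_self)
    · obtain ⟨V', hV', rfl⟩ := List.mem_map.mp hV
      exact (ih (fun W hW => hl W (List.mem_cons_of_mem _ hW)) V' hV').diff
        (hl A (List.mem_cons_self))

lemma dj_union : ∀ (l : List (Set α)), ⋃₀ {s | s ∈ dj l} = ⋃₀ {s | s ∈ l} := by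
  intro l
  induction l with
  | nil => rfl
  | cons A l ih =>
    have ihx : ∀ x, (∃ t, t ∈ dj l ∧ x ∈ t) ↔ (∃ t, t ∈ l ∧ x ∈ t) := by
      intro x
      have : x ∈ ⋃₀ {s | s ∈ dj l} ↔ x ∈ ⋃₀ {s | s ∈ l} := by rw [ih]
      simpa [mem_sUnion] using this
    ext x
    simp only [mem_sUnion, mem_setOf_eq, dj, List.mem_cons, List.mem_map]
    constructor
    · rintro ⟨t, (rfl | ⟨a, ha, rfl⟩), hx⟩
      · exact ⟨t, Or.inl rfl, hx⟩
      · obtain ⟨w, hw, hxw⟩ := (ihx x).mp ⟨a, ha, hx.1⟩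
        exact ⟨w, Or.inr hw, hxw⟩
    · rintro ⟨t, (rfl | ht), hx⟩
      · exact ⟨t, Or.inl rfl, hx⟩
      · by_cases hA : x ∈ A
        · exact ⟨A, Or.inl rfl, hA⟩
        · obtain ⟨a, ha, hxa⟩ := (ihx x).mpr ⟨t, ht, hx⟩
          exact ⟨a \ A, Or.inr ⟨a, ha, rfl⟩, hxa, hA⟩

lemma dj_pairwise : ∀ (l : List (Set α)), (dj l).Pairwise Disjoint := by
  intro l
  induction l with
  | nil => exact List.Pairwise.nil
  | cons A l ih =>
    refine List.Pairwise.cons ?_ ?_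
    · intro V hV
      obtain ⟨V', hV', rfl⟩ := List.mem_map.mp hV
      exact Set.disjoint_left.mpr fun a ha hb => hb.2 ha
    · exact List.Pairwise.map _ (fun {a b} h => Disjoint.mono diff_subset diff_subset h) ih


/-- `uset` of a list of sets -/
def usetL (l : List (Set α)) : Set α := ⋃₀ {s | s ∈ l}

lemma mem_usetL {l : List (Set α)} {x : α} : x ∈ usetL l ↔ ∃ s ∈ l, x ∈ s := by
  simp [usetL, mem_sUnion]

lemma usetL_filter_nonempty (l : List (Set α)) :
    usetL (l.filter (fun s => decide s.Nonempty)) = usetL l := by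
  ext x
  simp only [mem_usetL, List.mem_filter, decide_eq_true_eq]
  exact ⟨fun ⟨s, ⟨hs, _⟩, hx⟩ => ⟨s, hs, hx⟩, fun ⟨s, hs, hx⟩ => ⟨s, ⟨hs, ⟨x, hx⟩⟩, hx⟩⟩

lemma partition_lemma (hperf : ∀ x : α, Filter.NeBot (nhdsWithin x {x}ᶜ))
    {U : Set α} (hU : IsClopen U) (hne : U.Nonempty) {ε : ℝ} (hε : 0 < ε) :
    ∃ L : List (Set α), L ≠ [] ∧ L.Pairwise Disjoint ∧
      (∀ V ∈ L, IsClopen V ∧ V.Nonempty ∧ Metric.diam V ≤ ε) ∧ usetL L = U := by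
  -- for each x ∈ U get a clopen nbhd inside ball x (ε/2) ∩ U
  have hcov : ∀ x ∈ U, ∃ W : Set α, IsClopen W ∧ x ∈ W ∧ W ⊆ ball x (ε/2) ∩ U := by
    intro x hx
    exact compact_exists_isClopen_in_isOpen (isOpen_ball.inter hU.2) ⟨mem_ball_self (by linarith), hx⟩
  choose! W hWclopen hWmem hWsub using hcov
  have hUcomp : IsCompact U := hU.1.isCompact
  obtain ⟨t, htU, htfin, hcov2⟩ := hUcomp.elim_finite_subcover_image
    (fun x (hx : x ∈ U) => (hWclopen x hx).2) (fun z hz => mem_biUnion hz (hWmem z hz))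
  -- the list of candidate pieces
  classical
  let l0 : List (Set α) := htfin.toFinset.toList.map (fun x => W x)
  have hl0 : ∀ V ∈ l0, IsClopen V ∧ Metric.diam V ≤ ε ∧ V ⊆ U := by
    intro V hV
    obtain ⟨x, hx, rfl⟩ := List.mem_map.mp hV
    have hxU : x ∈ U := htU (by simpa [Set.Finite.mem_toFinset] using hx)
    refine ⟨hWclopen x hxU, ?_, (hWsub x hxU).trans inter_subset_right⟩
    calc Metric.diam (W x) ≤ Metric.diam (ball x (ε/2)) :=
          diam_mono ((hWsub x hxU).trans inter_subset_left) isBounded_ball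
      _ ≤ 2 * (ε/2) := diam_ball (by linarith)
      _ = ε := by ring
  have hl0U : usetL l0 = U := by
    apply subset_antisymm
    · intro x hx
      obtain ⟨s, hs, hxs⟩ := mem_usetL.mp hx
      exact (hl0 s hs).2.2 hxs
    · intro z hz
      obtain ⟨x, hx, hzx⟩ := mem_iUnion₂.mp (hcov2 hz)
      exact mem_usetL.mpr ⟨W x, List.mem_map.mpr
        ⟨x, by simpa [Set.Finite.mem_toFinset] using hx, rfl⟩, hzx⟩
  -- disjointify and filter
  refine ⟨(dj l0).filter (fun s => decide s.Nonempty), ?_, ?_, ?_, ?_⟩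
  · intro hnil
    obtain ⟨x, hx⟩ := hne
    have : x ∈ usetL ((dj l0).filter (fun s => decide s.Nonempty)) := by
      rw [usetL_filter_nonempty]
      show x ∈ ⋃₀ {s | s ∈ dj l0}
      rw [dj_union]
      rw [show ⋃₀ {s | s ∈ l0} = usetL l0 from rfl, hl0U]
      exact hx
    rw [hnil] at this
    simp [usetL] at this
  · exact (dj_pairwise l0).sublist (List.filter_sublist)
  · intro V hV
    have hV' := List.mem_filter.mp hV
    obtain ⟨Wp, hWp, hsub⟩ := dj_subset l0 V hV'.1
    have h0 := hl0 Wp hWp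
    refine ⟨dj_clopen l0 (fun W hW => (hl0 W hW).1) V hV'.1, by simpa using hV'.2, ?_⟩
    exact le_trans (diam_mono hsub (bounded_all _)) h0.2.1
  · rw [usetL_filter_nonempty]
    show ⋃₀ {s | s ∈ dj l0} = U
    rw [dj_union]
    exact hl0U

variable (α) in
/-- diameter bound base -/
def RR : ℝ := Metric.diam (univ : Set α) + 1

lemma RR_pos : 0 < RR α := by
  have := Metric.diam_nonneg (s := (univ : Set α))
  unfold RR; linarith

/-- invariant for a node `(Q, n)` of the binary tree -/
def Good (Q : List (Set α)) (n : ℕ) : Prop :=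
  Q ≠ [] ∧ Q.Pairwise Disjoint ∧
    ∀ V ∈ Q, IsClopen V ∧ V.Nonempty ∧ Metric.diam V ≤ (1/2)^n * RR α

/-- conditions tying a node to its two children -/
def StepOK (p : List (Set α) × ℕ) (c : Bool → List (Set α) × ℕ) : Prop :=
  (∀ i, Good (c i).1 (c i).2) ∧
  (c false).2 = (c true).2 ∧
  Disjoint (usetL (c false).1) (usetL (c true).1) ∧
  usetL (c false).1 ∪ usetL (c true).1 = usetL p.1 ∧
  p.2 ≤ (c false).2 ∧ (c false).2 ≤ p.2 + 1 ∧
  ((c false).2 = p.2 → (c false).1.length < p.1.length ∧ (c true).1.length < p.1.length) ∧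
  ((c false).2 = p.2 + 1 → ∃ U, p.1 = [U] ∧ usetL (c false).1 ∪ usetL (c true).1 ⊆ U)

lemma usetL_singleton (U : Set α) : usetL [U] = U := by simp [usetL]

lemma usetL_cons (A : Set α) (l : List (Set α)) : usetL (A :: l) = A ∪ usetL l := by
  ext x
  simp only [mem_usetL, List.mem_cons, mem_union]
  constructor
  · rintro ⟨s, (rfl | hs), hx⟩
    · exact Or.inl hx
    · exact Or.inr ⟨s, hs, hx⟩
  · rintro (hx | ⟨s, hs, hx⟩)
    · exact ⟨A, Or.inl rfl, hx⟩
    · exact ⟨s, Or.inr hs, hx⟩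

lemma disjoint_head_tail {A : Set α} {l : List (Set α)}
    (h : (A :: l).Pairwise Disjoint) : Disjoint A (usetL l) := by
  rw [Set.disjoint_right]
  intro x hx
  obtain ⟨s, hs, hxs⟩ := mem_usetL.mp hx
  exact fun hxA => (List.pairwise_cons.mp h).1 s hs |>.le_bot ⟨hxA, hxs⟩

lemma step_exists (hperf : ∀ x : α, Filter.NeBot (nhdsWithin x {x}ᶜ))
    (p : List (Set α) × ℕ) (h : Good p.1 p.2) : ∃ c, StepOK p c := by
  obtain ⟨hne, hpw, hmem⟩ := h
  set n := p.2 with hn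
  rcases hl : p.1 with _ | ⟨U, rest⟩
  · exact absurd hl hne
  rcases hr : rest with _ | ⟨B, rest'⟩
  · -- singleton case
    subst hr
    have hU := hmem U (by rw [hl]; exact List.mem_cons_self)
    have hε : (0:ℝ) < (1/2)^(n+1) * RR α := mul_pos (by positivity) RR_pos
    obtain ⟨L, Lne, Lpw, Lprops, LU⟩ := partition_lemma hperf hU.1 hU.2.1 hε
    rcases hL : L with _ | ⟨W, rest2⟩
    · exact absurd hL Lne
    subst hL
    rcases hr2 : rest2 with _ | ⟨B2, rest3⟩
    · -- L = [W], split W in two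
      subst hr2
      have hWU : W = U := by rw [← usetL_singleton W, LU]
      have hW := Lprops W (List.mem_cons_self)
      obtain ⟨V, V', hVc, hV'c, hVne, hV'ne, hVV', hVun⟩ :=
        split_clopen hperf hW.1 hW.2.1
      refine ⟨fun i => if i then ([V'], n+1) else ([V], n+1), ?_, ?_, ?_, ?_, ?_, ?_, ?_, ?_⟩
      · intro i
        cases i <;> simp only [if_true, if_false, Bool.false_eq_true, ite_false, ite_true] <;>
          refine ⟨by simp, List.pairwise_singleton _ _, ?_⟩
        · intro X hX
          rw [List.mem_singleton] at hX
          subst hX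
          exact ⟨hVc, hVne, le_trans (diam_mono (hVun ▸ subset_union_left) (bounded_all _)) hW.2.2⟩
        · intro X hX
          rw [List.mem_singleton] at hX
          subst hX
          exact ⟨hV'c, hV'ne, le_trans (diam_mono (hVun ▸ subset_union_right) (bounded_all _)) hW.2.2⟩
      · simp
      · simpa [usetL_singleton] using hVV'
      · simp only [Bool.false_eq_true, ite_false, ite_true, usetL_singleton, hl, hVun, hWU]
      · simp [hn]
      · simp [hn]
      · intro h
        simp only [Bool.false_eq_true, ite_false] at h
        omega
      · intro _
        refine ⟨U, hl, ?_⟩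
        simp only [Bool.false_eq_true, ite_false, ite_true, usetL_singleton]
        rw [hVun, hWU]
    · -- L = W :: B2 :: rest3
      subst hr2
      refine ⟨fun i => if i then (B2 :: rest3, n+1) else ([W], n+1), ?_, ?_, ?_, ?_, ?_, ?_, ?_, ?_⟩
      · intro i
        cases i <;> simp only [if_true, if_false, Bool.false_eq_true, ite_false, ite_true]
        · refine ⟨by simp, List.pairwise_singleton _ _, ?_⟩
          intro X hX
          rw [List.mem_singleton] at hX
          rw [hX]
          exact Lprops W (List.mem_cons_self)
        · exact ⟨by simp, (List.pairwise_cons.mp Lpw).2,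
            fun X hX => Lprops X (List.mem_cons_of_mem _ hX)⟩
      · simp
      · simp only [Bool.false_eq_true, ite_false, ite_true, usetL_singleton]
        exact disjoint_head_tail Lpw
      · simp only [Bool.false_eq_true, ite_false, ite_true, usetL_singleton, hl]
        rw [← usetL_cons, LU]
      · simp [hn]
      · simp [hn]
      · intro h
        simp only [Bool.false_eq_true, ite_false] at h
        omega
      · intro _
        refine ⟨U, hl, ?_⟩
        simp only [Bool.false_eq_true, ite_false, ite_true, usetL_singleton]
        rw [← usetL_cons, LU]
  · -- multi case
    subst hr
    refine ⟨fun i => if i then (B :: rest', n) else ([U], n), ?_, ?_, ?_, ?_, ?_, ?_, ?_, ?_⟩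
    · intro i
      cases i <;> simp only [if_true, if_false, Bool.false_eq_true, ite_false, ite_true]
      · refine ⟨by simp, List.pairwise_singleton _ _, ?_⟩
        intro X hX
        rw [List.mem_singleton] at hX
        rw [hX]
        exact hmem U (by rw [hl]; exact List.mem_cons_self)
      · refine ⟨by simp, ?_, ?_⟩
        · have := hpw; rw [hl] at this; exact (List.pairwise_cons.mp this).2
        · intro X hX
          exact hmem X (by rw [hl]; exact List.mem_cons_of_mem _ hX)
    · simp
    · simp only [Bool.false_eq_true, ite_false, ite_true, usetL_singleton]
      have := hpw; rw [hl] at this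
      exact disjoint_head_tail this
    · simp only [Bool.false_eq_true, ite_false, ite_true, usetL_singleton, hl]
      rw [← usetL_cons]
    · simp [hn]
    · simp [hn]
    · intro _
      constructor <;> · rw [hl]; simp
    · intro h
      simp only [Bool.false_eq_true, ite_false] at h
      omega

section Tree

variable (hperf : ∀ x : α, Filter.NeBot (nhdsWithin x {x}ᶜ))

/-- the child function, defined by choice -/
def chld (p : List (Set α) × ℕ) : Bool → List (Set α) × ℕ :=
  if h : Good p.1 p.2 then Classical.choose (step_exists hperf p h) else fun _ => p

lemma chld_ok {p : List (Set α) × ℕ} (h : Good p.1 p.2) : StepOK p (chld hperf p) := by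
  rw [chld, dif_pos h]
  exact Classical.choose_spec (step_exists hperf p h)

/-- the node of the tree along branch `b` at depth `m` -/
def node (b : ℕ → Bool) : ℕ → List (Set α) × ℕ
  | 0 => ([univ], 0)
  | m+1 => chld hperf (node b m) (b m)

lemma good_root : Good ([(univ : Set α)]) 0 := by
  refine ⟨by simp, List.pairwise_singleton _ _, ?_⟩
  intro V hV
  rw [List.mem_singleton] at hV
  subst hV
  refine ⟨isClopen_univ, univ_nonempty, ?_⟩
  simp only [pow_zero, one_mul, RR]
  linarith

lemma good_node (b : ℕ → Bool) (m : ℕ) : Good (node hperf b m).1 (node hperf b m).2 := by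
  induction m with
  | zero => exact good_root
  | succ m ih => exact ((chld_ok hperf ih).1 (b m))

lemma node_stepOK (b : ℕ → Bool) (m : ℕ) :
    StepOK (node hperf b m) (chld hperf (node hperf b m)) :=
  chld_ok hperf (good_node hperf b m)

/-- the set attached to the node at depth `m` -/
def C (b : ℕ → Bool) (m : ℕ) : Set α := usetL (node hperf b m).1

lemma C_zero (b : ℕ → Bool) : C hperf b 0 = univ := by
  simp [C, node, usetL_singleton]

lemma C_succ_subset (b : ℕ → Bool) (m : ℕ) : C hperf b (m+1) ⊆ C hperf b m := by
  have h := node_stepOK hperf b m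
  have hun := h.2.2.2.1
  show usetL (chld hperf (node hperf b m) (b m)).1 ⊆ usetL (node hperf b m).1
  cases hb : b m
  · rw [← hun]; exact subset_union_left
  · rw [← hun]; exact subset_union_right

lemma C_antitone (b : ℕ → Bool) : Antitone (C hperf b) :=
  antitone_nat_of_succ_le fun m => C_succ_subset hperf b m

lemma C_nonempty (b : ℕ → Bool) (m : ℕ) : (C hperf b m).Nonempty := by
  obtain ⟨hne, _, hmem⟩ := good_node hperf b m
  rcases hl : (node hperf b m).1 with _ | ⟨U, rest⟩
  · exact absurd hl hne
  obtain ⟨x, hx⟩ := (hmem U (by rw [hl]; exact List.mem_cons_self)).2.1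
  exact ⟨x, mem_usetL.mpr ⟨U, by rw [hl]; exact List.mem_cons_self, hx⟩⟩

lemma C_closed (b : ℕ → Bool) (m : ℕ) : IsClosed (C hperf b m) := by
  obtain ⟨_, _, hmem⟩ := good_node hperf b m
  have : C hperf b m = ⋃ s ∈ {s | s ∈ (node hperf b m).1}, s := by
    simp [C, usetL, sUnion_eq_biUnion]
  rw [this]
  exact (List.finite_toSet _).isClosed_biUnion fun s hs => (hmem s hs).1.1

lemma C_compact (b : ℕ → Bool) (m : ℕ) : IsCompact (C hperf b m) :=
  (C_closed hperf b m).isCompact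

/-- level of the node at depth `m` -/
def lvl (b : ℕ → Bool) (m : ℕ) : ℕ := (node hperf b m).2

lemma lvl_zero (b : ℕ → Bool) : lvl hperf b 0 = 0 := rfl

lemma chld_snd_eq (p : List (Set α) × ℕ) (h : Good p.1 p.2) (i : Bool) :
    (chld hperf p i).2 = (chld hperf p false).2 := by
  cases i
  · rfl
  · exact ((chld_ok hperf h).2.1).symm

lemma lvl_succ_ge (b : ℕ → Bool) (m : ℕ) : lvl hperf b m ≤ lvl hperf b (m+1) := by
  have h := node_stepOK hperf b m
  have := h.2.2.2.2.1
  calc lvl hperf b m ≤ (chld hperf (node hperf b m) false).2 := this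
    _ = (chld hperf (node hperf b m) (b m)).2 :=
        (chld_snd_eq hperf _ (good_node hperf b m) (b m)).symm

lemma lvl_succ_le (b : ℕ → Bool) (m : ℕ) : lvl hperf b (m+1) ≤ lvl hperf b m + 1 := by
  have h := node_stepOK hperf b m
  have h2 := h.2.2.2.2.2.1
  calc lvl hperf b (m+1) = (chld hperf (node hperf b m) (b m)).2 := rfl
    _ = (chld hperf (node hperf b m) false).2 := chld_snd_eq hperf _ (good_node hperf b m) (b m)
    _ ≤ lvl hperf b m + 1 := h2

lemma lvl_mono (b : ℕ → Bool) : Monotone (lvl hperf b) :=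
  monotone_nat_of_le_succ fun m => lvl_succ_ge hperf b m

lemma lvl_grows_aux : ∀ (k : ℕ) (b : ℕ → Bool) (m : ℕ),
    (node hperf b m).1.length ≤ k → lvl hperf b m + 1 ≤ lvl hperf b (m+k) := by
  intro k
  induction k with
  | zero =>
    intro b m hk
    have := (good_node hperf b m).1
    rcases hl : (node hperf b m).1 with _ | ⟨U, rest⟩
    · exact absurd hl this
    · rw [hl] at hk; simp at hk
  | succ k ih =>
    intro b m hk
    by_cases hlv : lvl hperf b (m+1) = lvl hperf b m
    · -- level unchanged: lengths drop
      have h := node_stepOK hperf b m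
      have hlen := h.2.2.2.2.2.2.1
      have heq : (chld hperf (node hperf b m) false).2 = (node hperf b m).2 := by
        have e := chld_snd_eq hperf (node hperf b m) (good_node hperf b m) (b m)
        have h0 : (chld hperf (node hperf b m) (b m)).2 = (node hperf b m).2 := hlv
        rw [e] at h0
        exact h0
      obtain ⟨hf, ht⟩ := hlen heq
      have hlt : (node hperf b (m+1)).1.length < (node hperf b m).1.length := by
        show (chld hperf (node hperf b m) (b m)).1.length < _
        cases b m
        · exact hf
        · exact ht
      have hk' : (node hperf b (m+1)).1.length ≤ k := by omega
      have := ih b (m+1) hk'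
      calc lvl hperf b m + 1 = lvl hperf b (m+1) + 1 := by rw [hlv]
        _ ≤ lvl hperf b (m+1+k) := this
        _ = lvl hperf b (m+(k+1)) := by ring_nf
    · -- level changed
      have h1 := lvl_succ_ge hperf b m
      have h2 := lvl_succ_le hperf b m
      have h3 : lvl hperf b m + 1 ≤ lvl hperf b (m+1) := by omega
      calc lvl hperf b m + 1 ≤ lvl hperf b (m+1) := h3
        _ ≤ lvl hperf b (m+(k+1)) := lvl_mono hperf b (by omega)

lemma lvl_unbounded (b : ℕ → Bool) (K : ℕ) : ∃ m, K ≤ lvl hperf b m := by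
  induction K with
  | zero => exact ⟨0, Nat.zero_le _⟩
  | succ K ih =>
    obtain ⟨m, hm⟩ := ih
    refine ⟨m + (node hperf b m).1.length, ?_⟩
    have := lvl_grows_aux hperf (node hperf b m).1.length b m le_rfl
    omega

lemma diam_small (b : ℕ → Bool) (k : ℕ) :
    ∃ m, Metric.diam (C hperf b m) ≤ (1/2)^k * RR α := by
  obtain ⟨M, hM⟩ := lvl_unbounded hperf b (k+1)
  have hex : ∃ m, k + 1 ≤ lvl hperf b m := ⟨M, hM⟩
  classical
  have hm₁ : k + 1 ≤ lvl hperf b (Nat.find hex) := Nat.find_spec hex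
  have hm₁0 : Nat.find hex ≠ 0 := by
    intro h
    rw [h, lvl_zero] at hm₁
    omega
  obtain ⟨m, hm⟩ := Nat.exists_eq_succ_of_ne_zero hm₁0
  rw [Nat.succ_eq_add_one] at hm
  rw [hm] at hm₁
  have hmlt : ¬ (k + 1 ≤ lvl hperf b m) := Nat.find_min hex (by omega)
  have h2 := lvl_succ_le hperf b m
  have hlvm : lvl hperf b m = k := by omega
  -- level increased at step m, so parent is a singleton
  have h := node_stepOK hperf b m
  have hsing := h.2.2.2.2.2.2.2
  have heq : (chld hperf (node hperf b m) false).2 = (node hperf b m).2 + 1 := by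
    have e := chld_snd_eq hperf (node hperf b m) (good_node hperf b m) (b m)
    have h0 : (chld hperf (node hperf b m) (b m)).2 = lvl hperf b (m+1) := rfl
    rw [e] at h0
    rw [h0]
    show lvl hperf b (m+1) = lvl hperf b m + 1
    omega
  obtain ⟨U, hU, hsub⟩ := hsing heq
  have hCm : C hperf b (m+1) ⊆ U := by
    show usetL (chld hperf (node hperf b m) (b m)).1 ⊆ U
    cases b m
    · exact subset_union_left.trans hsub
    · exact subset_union_right.trans hsub
  have hUdiam : Metric.diam U ≤ (1/2)^k * RR α := by
    have := (good_node hperf b m).2.2 U (by rw [hU]; exact List.mem_cons_self)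
    rw [show (node hperf b m).2 = k from hlvm] at this
    exact this.2.2
  exact ⟨m+1, le_trans (diam_mono hCm (bounded_all _)) hUdiam⟩

lemma iInter_nonempty (b : ℕ → Bool) : (⋂ m, C hperf b m).Nonempty :=
  IsCompact.nonempty_iInter_of_sequence_nonempty_isCompact_isClosed _
    (C_succ_subset hperf b) (C_nonempty hperf b) (C_compact hperf b 0) (C_closed hperf b)

/-- the limit point of a branch -/
def limitF (b : ℕ → Bool) : α := (iInter_nonempty hperf b).some

lemma limitF_mem (b : ℕ → Bool) (m : ℕ) : limitF hperf b ∈ C hperf b m := by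
  have := (iInter_nonempty hperf b).some_mem
  exact mem_iInter.mp this m

lemma eq_limitF {b : ℕ → Bool} {x : α} (hx : ∀ m, x ∈ C hperf b m) : x = limitF hperf b := by
  have hd : ∀ k : ℕ, dist x (limitF hperf b) ≤ (1/2)^k * RR α := by
    intro k
    obtain ⟨m, hm⟩ := diam_small hperf b k
    exact le_trans (dist_le_diam_of_mem (bounded_all _) (hx m) (limitF_mem hperf b m)) hm
  have htend : Filter.Tendsto (fun k : ℕ => ((1:ℝ)/2)^k * RR α) Filter.atTop (nhds 0) := by
    have := (tendsto_pow_atTop_nhds_zero_of_lt_one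
      (by norm_num : (0:ℝ) ≤ 1/2) (by norm_num)).mul_const (RR α)
    simpa using this
  have h0 : dist x (limitF hperf b) ≤ 0 := ge_of_tendsto' htend hd
  have := dist_nonneg (x := x) (y := limitF hperf b)
  rw [← dist_eq_zero (x := x) (y := limitF hperf b)]
  linarith

lemma node_congr {b b' : ℕ → Bool} {m : ℕ} (h : ∀ i < m, b i = b' i) :
    node hperf b m = node hperf b' m := by
  induction m with
  | zero => rfl
  | succ m ih =>
    show chld hperf (node hperf b m) (b m) = chld hperf (node hperf b' m) (b' m)
    rw [ih (fun i hi => h i (by omega)), h m (by omega)]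

lemma limitF_injective : Function.Injective (limitF hperf) := by
  intro b b' hEq
  by_contra hne
  have hex : ∃ m, b m ≠ b' m := by
    by_contra h
    push_neg at h
    exact hne (funext h)
  classical
  have hmin : ∀ i < Nat.find hex, b i = b' i := fun i hi => by
    have := Nat.find_min hex hi
    simpa using this
  set m := Nat.find hex with hmdef
  have hagree : node hperf b m = node hperf b' m := node_congr hperf hmin
  have hdisj := (node_stepOK hperf b m).2.2.1
  have hb : limitF hperf b ∈ usetL (chld hperf (node hperf b m) (b m)).1 := limitF_mem hperf b (m+1)
  have hb' : limitF hperf b' ∈ usetL (chld hperf (node hperf b' m) (b' m)).1 :=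
    limitF_mem hperf b' (m+1)
  rw [← hagree] at hb'
  have hne2 : b m ≠ b' m := Nat.find_spec hex
  have : Disjoint (usetL (chld hperf (node hperf b m) (b m)).1)
      (usetL (chld hperf (node hperf b m) (b' m)).1) := by
    cases hc : b m <;> cases hc' : b' m
    · rw [hc, hc'] at hne2; exact absurd rfl hne2
    · exact hdisj
    · exact hdisj.symm
    · rw [hc, hc'] at hne2; exact absurd rfl hne2
  exact Set.disjoint_left.mp this hb (hEq ▸ hb')

/-- the branch of a point, by recursion -/
def sx (x : α) : ℕ → List (Set α) × ℕ
  | 0 => ([univ], 0)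
  | m+1 => chld hperf (sx x m) (decide (x ∉ usetL (chld hperf (sx x m) false).1))

/-- the bit sequence of a point -/
def bx (x : α) (m : ℕ) : Bool := decide (x ∉ usetL (chld hperf (sx hperf x m) false).1)

lemma node_bx (x : α) (m : ℕ) : node hperf (bx hperf x) m = sx hperf x m := by
  induction m with
  | zero => rfl
  | succ m ih =>
    show chld hperf (node hperf (bx hperf x) m) (bx hperf x m) = _
    rw [ih]
    rfl

lemma mem_sx (x : α) (m : ℕ) : x ∈ usetL (sx hperf x m).1 := by
  induction m with
  | zero => simp [sx, usetL_singleton]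
  | succ m ih =>
    have hgood : Good (sx hperf x m).1 (sx hperf x m).2 := by
      rw [← node_bx hperf x m]
      exact good_node hperf (bx hperf x) m
    have hok := chld_ok hperf hgood
    have hun := hok.2.2.2.1
    by_cases hx : x ∈ usetL (chld hperf (sx hperf x m) false).1
    · have hb : (decide (x ∉ usetL (chld hperf (sx hperf x m) false).1)) = false := by
        simp [hx]
      show x ∈ usetL (chld hperf (sx hperf x m)
        (decide (x ∉ usetL (chld hperf (sx hperf x m) false).1))).1
      rw [hb]
      exact hx
    · have hb : (decide (x ∉ usetL (chld hperf (sx hperf x m) false).1)) = true := by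
        simp [hx]
      show x ∈ usetL (chld hperf (sx hperf x m)
        (decide (x ∉ usetL (chld hperf (sx hperf x m) false).1))).1
      rw [hb]
      have : x ∈ usetL (chld hperf (sx hperf x m) false).1 ∪
          usetL (chld hperf (sx hperf x m) true).1 := by
        rw [hun]
        exact ih
      rcases this with h | h
      · exact absurd h hx
      · exact h

lemma limitF_surjective : Function.Surjective (limitF hperf) := by
  intro x
  refine ⟨bx hperf x, ?_⟩
  have : ∀ m, x ∈ C hperf (bx hperf x) m := by
    intro m
    show x ∈ usetL (node hperf (bx hperf x) m).1
    rw [node_bx]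
    exact mem_sx hperf x m
  exact (eq_limitF hperf this).symm

lemma limitF_continuous : Continuous (limitF hperf) := by
  rw [continuous_iff_continuousAt]
  intro b
  rw [ContinuousAt, Metric.tendsto_nhds]
  intro ε hε
  have htend : Filter.Tendsto (fun k : ℕ => ((1:ℝ)/2)^k * RR α) Filter.atTop (nhds 0) := by
    have := (tendsto_pow_atTop_nhds_zero_of_lt_one
      (by norm_num : (0:ℝ) ≤ 1/2) (by norm_num)).mul_const (RR α)
    simpa using this
  obtain ⟨k, hk⟩ := (htend.eventually (gt_mem_nhds hε)).exists
  obtain ⟨m, hm⟩ := diam_small hperf b k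
  have hU : {b' : ℕ → Bool | ∀ i < m, b' i = b i} ∈ nhds b := by
    have heq : {b' : ℕ → Bool | ∀ i < m, b' i = b i} =
        ⋂ i ∈ Finset.range m, {b' : ℕ → Bool | b' i = b i} := by
      ext b'
      simp [Finset.mem_range]
    rw [heq]
    rw [Filter.biInter_finset_mem]
    intro i _
    have hopen : IsOpen {b' : ℕ → Bool | b' i = b i} := by
      have : {b' : ℕ → Bool | b' i = b i} = (fun b' : ℕ → Bool => b' i) ⁻¹' {b i} := by
        ext b'; simp
      rw [this]
      exact (continuous_apply i).isOpen_preimage _ (isOpen_discrete _)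
    exact IsOpen.mem_nhds hopen rfl
  apply Filter.eventually_of_mem hU
  intro b' hb'
  have hnode : node hperf b' m = node hperf b m := node_congr hperf (fun i hi => hb' i hi)
  have h1 : limitF hperf b' ∈ C hperf b m := by
    have := limitF_mem hperf b' m
    show limitF hperf b' ∈ usetL (node hperf b m).1
    rw [← hnode]
    exact this
  have h2 : limitF hperf b ∈ C hperf b m := limitF_mem hperf b m
  calc dist (limitF hperf b') (limitF hperf b) ≤ Metric.diam (C hperf b m) :=
        dist_le_diam_of_mem (bounded_all _) h1 h2
    _ ≤ (1/2)^k * RR α := hm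
    _ < ε := hk

/-- Brouwer: key direction -/
theorem key_homeo (hperf : ∀ x : α, Filter.NeBot (nhdsWithin x {x}ᶜ)) :
    Nonempty (α ≃ₜ (ℕ → Bool)) := by
  let e : (ℕ → Bool) ≃ α :=
    Equiv.ofBijective (limitF hperf) ⟨limitF_injective hperf, limitF_surjective hperf⟩
  have hc : Continuous e := limitF_continuous hperf
  exact ⟨(hc.homeoOfEquivCompactToT2).symm⟩

end Tree




/-- the Cantor space is homeomorphic to the Cantor set -/
def cantorHomeo : (ℕ → Bool) ≃ₜ cantorSet := by
  have hbij : Function.Bijective (fun b => (⟨cmap b, cmap_mem_cantorSet b⟩ : cantorSet)) := by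
    constructor
    · intro a b h
      exact cmap_injective (congrArg Subtype.val h)
    · rintro ⟨x, hx⟩
      obtain ⟨b, hb⟩ := cmap_surj_cantorSet hx
      exact ⟨b, Subtype.ext hb⟩
  have hc : Continuous (Equiv.ofBijective _ hbij) := cmap_continuous.subtype_mk _
  exact hc.homeoOfEquivCompactToT2

lemma cantorSpace_perfect : ∀ b : ℕ → Bool, Filter.NeBot (nhdsWithin b {b}ᶜ) := by
  intro b
  rw [← mem_closure_iff_nhdsWithin_neBot]
  have htend : Filter.Tendsto (fun k => Function.update b k (!(b k))) Filter.atTop (nhds b) := by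
    rw [tendsto_pi_nhds]
    intro i
    apply Filter.Tendsto.congr' _ tendsto_const_nhds
    filter_upwards [Filter.eventually_gt_atTop i] with k hk
    rw [Function.update_of_ne (by omega : i ≠ k)]
  apply mem_closure_of_tendsto htend
  filter_upwards with k
  intro h
  have := congrFun h k
  simp [Function.update_self] at this

/-- transfer of the four properties along a homeomorphism -/
lemma rhs_transfer {X Y : Type*} [TopologicalSpace X] [TopologicalSpace Y] (h : X ≃ₜ Y)
    (h1 : CompactSpace Y) (h2 : TopologicalSpace.MetrizableSpace Y)
    (h3 : TotallyDisconnectedSpace Y) (h4 : ∀ y : Y, Filter.NeBot (nhdsWithin y {y}ᶜ)) :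
    CompactSpace X ∧ TopologicalSpace.MetrizableSpace X ∧
      TotallyDisconnectedSpace X ∧ ∀ x : X, Filter.NeBot (nhdsWithin x {x}ᶜ) := by
  refine ⟨h.symm.compactSpace, h.isEmbedding.metrizableSpace, ?_, ?_⟩
  · constructor
    intro t _ ht
    have himg : (h '' t).Subsingleton :=
      h3.isTotallyDisconnected_univ (h '' t) (subset_univ _)
        (ht.image h h.continuous.continuousOn)
    intro a ha b hb
    exact h.injective (himg ⟨a, ha, rfl⟩ ⟨b, hb, rfl⟩)
  · intro x
    have := h4 (h x)
    have hmap : Filter.map h (nhdsWithin x {x}ᶜ) = nhdsWithin (h x) {h x}ᶜ :=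
      h.map_punctured_nhds_eq x
    rw [← hmap] at this
    exact Filter.map_neBot_iff h |>.mp this


end CantorChar

/-- `cantorSet` is Mathlib's standard middle-thirds Cantor set in `[0,1]`. -/
theorem cantor_characterization (α : Type*) [TopologicalSpace α] [Nonempty α] :
    Nonempty (α ≃ₜ cantorSet) ↔
      (CompactSpace α ∧ TopologicalSpace.MetrizableSpace α ∧
        TotallyDisconnectedSpace α ∧
        ∀ x : α, Filter.NeBot (nhdsWithin x {x}ᶜ)) := by
  constructor
  · rintro ⟨h⟩
    exact CantorChar.rhs_transfer (h.trans CantorChar.cantorHomeo.symm)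
      inferInstance inferInstance inferInstance CantorChar.cantorSpace_perfect
  · rintro ⟨hC, hM, hT, hP⟩
    haveI := hC
    haveI := hM
    haveI := hT
    letI : MetricSpace α := TopologicalSpace.metrizableSpaceMetric α
    obtain ⟨e⟩ := CantorChar.key_homeo hP
    exact ⟨e.trans CantorChar.cantorHomeo⟩
end
end

section
/- If X ⊂ ℂ^N is compact and every closed ball intersected with a closed set Σ ⊂ ℂ^{N+1} containing Y = τ^{-1}(X) is polynomially convex (τ the projection of Σ onto the first N coordinates), then the polynomial hull Ŷ of Y is contained in Σ. -/
open Metric MvPolynomial Set MeasureTheory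

noncomputable section

theorem hull_subset_Sigma (N : ℕ) (S : Set ((Fin N → ℂ) × ℂ))
    (hcl : IsClosed S)
    (hpc : ∀ R : ℝ, 0 < R →
      polyHullP N (S ∩ Metric.closedBall 0 R) = S ∩ Metric.closedBall 0 R)
    (X : Set (Fin N → ℂ)) (hX : IsCompact X) :
    polyHullP N {w ∈ S | w.1 ∈ X} ⊆ S := by

  classical
  set Y : Set ((Fin N → ℂ) × ℂ) := {w ∈ S | w.1 ∈ X} with hY
  intro w hw
  -- Case: Y empty
  rcases Y.eq_empty_or_nonempty with hYe | hYne
  · exfalso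
    have h1 := hw (MvPolynomial.C 1)
    rw [hYe] at h1
    simp at h1
    linarith
  -- continuity helper
  have hcont : ∀ p : MvPolynomial (Fin (N + 1)) ℂ,
      Continuous fun x : (Fin N → ℂ) × ℂ => ‖eval (Fin.snoc x.1 x.2) p‖ := by
    intro p
    apply Continuous.norm
    have hsnoc : Continuous fun x : (Fin N → ℂ) × ℂ => (Fin.snoc x.1 x.2 : Fin (N+1) → ℂ) := by
      apply continuous_pi
      intro i
      refine Fin.lastCases ?_ ?_ i
      · simpa using continuous_snd
      · intro j
        simpa using (show Continuous fun a : (Fin N → ℂ) × ℂ => a.1 j by fun_prop)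
    exact (MvPolynomial.continuous_eval p).comp hsnoc
  by_cases hbdd : BddAbove ((fun x : (Fin N → ℂ) × ℂ => ‖x.2‖) '' Y)
  · -- bounded case: Y ⊆ S ∩ closedBall 0 R
    obtain ⟨M, hM⟩ := hbdd
    obtain ⟨M₁, hM₁⟩ := hX.isBounded.subset_closedBall 0
    set R : ℝ := max 1 (max M M₁) with hR
    have hR0 : (0:ℝ) < R := lt_of_lt_of_le one_pos (le_max_left _ _)
    have hYsub : Y ⊆ S ∩ Metric.closedBall 0 R := by
      rintro ⟨a, b⟩ ⟨haS, haX⟩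
      refine ⟨haS, ?_⟩
      rw [Metric.mem_closedBall, dist_zero_right, Prod.norm_def]
      apply max_le
      · have := hM₁ haX
        rw [Metric.mem_closedBall, dist_zero_right] at this
        exact this.trans ((le_max_right M M₁).trans (le_max_right _ _))
      · have : ‖b‖ ≤ M := hM ⟨⟨a, b⟩, ⟨haS, haX⟩, rfl⟩
        exact this.trans ((le_max_left M M₁).trans (le_max_right _ _))
    have hKcpt : IsCompact (S ∩ Metric.closedBall 0 R) :=
      (isCompact_closedBall (0 : (Fin N → ℂ) × ℂ) R).of_isClosed_subset
        (hcl.inter Metric.isClosed_closedBall) inter_subset_right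
    have hwK : w ∈ polyHullP N (S ∩ Metric.closedBall 0 R) := by
      intro p
      refine (hw p).trans ?_
      apply csSup_le_csSup
      · exact (hKcpt.image (hcont p)).bddAbove
      · exact hYne.image _
      · exact image_mono hYsub
    rw [hpc R hR0] at hwK
    exact hwK.1
  · -- unbounded case: w.2 = c for every c, contradiction
    exfalso
    have key : ∀ c : ℂ, w.2 = c := by
      intro c
      have hp := hw (MvPolynomial.X (Fin.last N) - MvPolynomial.C c)
      have heval : ∀ x : (Fin N → ℂ) × ℂ,
          eval (Fin.snoc x.1 x.2) (MvPolynomial.X (Fin.last N) - MvPolynomial.C c)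
            = x.2 - c := by
        intro x; simp [Fin.snoc_last]
      have hnb : ¬ BddAbove ((fun x : (Fin N → ℂ) × ℂ =>
          ‖eval (Fin.snoc x.1 x.2) (MvPolynomial.X (Fin.last N) - MvPolynomial.C c)‖) '' Y) := by
        intro ⟨M, hM⟩
        apply hbdd
        refine ⟨M + ‖c‖, ?_⟩
        rintro r ⟨x, hx, rfl⟩
        have := hM ⟨x, hx, rfl⟩
        simp only [heval] at this
        simp only []
        have h2 : ‖x.2‖ - ‖c‖ ≤ ‖x.2 - c‖ := norm_sub_norm_le _ _
        linarith
      rw [Real.sSup_of_not_bddAbove hnb, heval w] at hp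
      have : ‖w.2 - c‖ = 0 := le_antisymm hp (norm_nonneg _)
      exact sub_eq_zero.mp (norm_eq_zero.mp this)
    have h0 := key 0
    have h1 := key 1
    rw [h0] at h1
    exact zero_ne_one h1
end
end
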